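/- For every real s ≥ 0 and all real α > 0, β > 0, if the series ∑_{n=0}^∞ f(s;n,α,β)^2 / f(s;n+1,α,β) converges, then the Fisher information of the marginal model, defined as the expectation of the squared score, satisfies I(s) := ∑_{k=0}^∞ p(k|s) · (−1 + f^{(1)}(s;k,α,β)/f(s;k,α,β))^2 = (β/(1+β))^α · e^{−s} · ∑_{n=0}^∞ f(s;n,α,β)^2 / f(s;n+1,α,β) − 1, where f^{(1)}(s;0,α,β) = 0 and f^{(1)}(s;k,α,β) = f(s;k−1,α,β) for k ≥ 1. -/

import Mathlib

/-- The polynomial `f(s;k,α,β)`. -/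
noncomputable def f (s : ℝ) (k : ℕ) (α β : ℝ) : ℝ :=
  ∑ n ∈ Finset.range (k + 1),
    (Real.Gamma (α + n) / Real.Gamma α) * s ^ (k - n) /
      ((n.factorial : ℝ) * ((k - n).factorial : ℝ) * (1 + β) ^ n)

/-- The marginal model `p(k|s) = (β/(1+β))^α · e^{−s} · f(s;k,α,β)`. -/
noncomputable def p (s : ℝ) (k : ℕ) (α β : ℝ) : ℝ :=
  (β / (1 + β)) ^ α * Real.exp (-s) * f s k α β

open MeasureTheory Set

lemma f_pos {s : ℝ} (hs : 0 ≤ s) {α β : ℝ} (hα : 0 < α) (hβ : 0 < β) (k : ℕ) :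
    0 < f s k α β := by
  have hΓ : 0 < Real.Gamma α := Real.Gamma_pos_of_pos hα
  unfold f
  apply Finset.sum_pos'
  · intro i _
    have h1 : 0 < Real.Gamma (α + i) := Real.Gamma_pos_of_pos (by positivity)
    positivity
  · refine ⟨k, Finset.self_mem_range_succ k, ?_⟩
    have h1 : 0 < Real.Gamma (α + k) := Real.Gamma_pos_of_pos (by positivity)
    simp only [Nat.sub_self, pow_zero, Nat.factorial_zero]
    positivity

/-- The binomial series `∑ Γ(a+n) xⁿ/n! = (1/(1-x))^a Γ(a)`. -/
lemma hasSum_binomial {a x : ℝ} (ha : 0 < a) (hx0 : 0 ≤ x) (hx1 : x < 1) :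
    HasSum (fun n : ℕ => Real.Gamma (a + n) * x ^ n / n.factorial)
      ((1 / (1 - x)) ^ a * Real.Gamma a) := by
  set r : ℝ := 1 - x with hrdef
  have hrpos : 0 < r := by simp only [hrdef]; linarith
  set F : ℕ → ℝ := fun n => Real.Gamma (a + n) * x ^ n / n.factorial with hF
  have hterm : ∀ n : ℕ, 0 ≤ F n := by
    intro n
    have h1 : 0 < Real.Gamma (a + n) := Real.Gamma_pos_of_pos (by positivity)
    simp only [hF]
    positivity
  have hint : ∀ n : ℕ, IntegrableOn
      (fun t : ℝ => Real.exp (-t) * t ^ (a + n - 1) * (x ^ n / n.factorial)) (Ioi 0) :=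
    fun n => (Real.GammaIntegral_convergent (by positivity : (0:ℝ) < a + n)).mul_const _
  have h1 : ∀ n : ℕ, (∫⁻ t in Ioi (0:ℝ),
      ENNReal.ofReal (Real.exp (-t) * t ^ (a + n - 1) * (x ^ n / n.factorial)))
      = ENNReal.ofReal (F n) := by
    intro n
    rw [← MeasureTheory.ofReal_integral_eq_lintegral_ofReal (hint n) ?_]
    · congr 1
      rw [MeasureTheory.integral_mul_const _ _, ← Real.Gamma_eq_integral (by positivity : (0:ℝ) < a + n)]
      simp only [hF]; ring
    · filter_upwards [MeasureTheory.ae_restrict_mem measurableSet_Ioi] with t ht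
      exact mul_nonneg (mul_nonneg (Real.exp_pos _).le
        (Real.rpow_nonneg (le_of_lt ht) _)) (by positivity)
  have h2 : ∀ t ∈ Ioi (0:ℝ),
      (∑' n : ℕ, ENNReal.ofReal (Real.exp (-t) * t ^ (a + n - 1) * (x ^ n / n.factorial)))
      = ENNReal.ofReal (t ^ (a - 1) * Real.exp (-(r * t))) := by
    intro t ht
    have ht0 : (0:ℝ) < t := ht
    have heq : ∀ n : ℕ, Real.exp (-t) * t ^ (a + n - 1) * (x ^ n / n.factorial)
        = (t ^ (a - 1) * Real.exp (-t)) * ((x * t) ^ n / n.factorial) := by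
      intro n
      have h : t ^ (a + n - 1) = t ^ (a - 1) * t ^ (n : ℕ) := by
        rw [← Real.rpow_natCast t n, ← Real.rpow_add ht0]
        ring_nf
      rw [h, mul_pow]
      ring
    simp_rw [heq]
    rw [← ENNReal.ofReal_tsum_of_nonneg (fun n => by positivity)
      ((Real.summable_pow_div_factorial (x * t)).mul_left _)]
    congr 1
    rw [tsum_mul_left]
    have hexp : (∑' n : ℕ, (x * t) ^ n / n.factorial) = Real.exp (x * t) := by
      rw [Real.exp_eq_exp_ℝ]
      exact (NormedSpace.expSeries_div_hasSum_exp (x * t)).tsum_eq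
    rw [hexp, mul_assoc, ← Real.exp_add]
    congr 2
    simp only [hrdef]; ring
  have hmeas : ∀ n : ℕ, AEMeasurable
      (fun t : ℝ => ENNReal.ofReal (Real.exp (-t) * t ^ (a + n - 1) * (x ^ n / n.factorial)))
      (volume.restrict (Ioi (0:ℝ))) := by
    intro n
    apply Measurable.aemeasurable
    apply ENNReal.measurable_ofReal.comp
    apply Measurable.mul_const
    exact (Real.measurable_exp.comp measurable_neg).mul (measurable_id.pow_const _)
  have h3 := MeasureTheory.lintegral_tsum hmeas
  have h4 : (∫⁻ t in Ioi (0:ℝ), ENNReal.ofReal (t ^ (a - 1) * Real.exp (-(r * t))))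
      = ENNReal.ofReal ((1 / r) ^ a * Real.Gamma a) := by
    have hintr : IntegrableOn (fun t : ℝ => t ^ (a - 1) * Real.exp (-(r * t))) (Ioi 0) := by
      have := integrableOn_rpow_mul_exp_neg_mul_rpow
        (by linarith : (-1:ℝ) < a - 1) zero_lt_one hrpos
      refine this.congr_fun (fun t ht => ?_) measurableSet_Ioi
      simp only [Real.rpow_one]
      ring_nf
    rw [← MeasureTheory.ofReal_integral_eq_lintegral_ofReal hintr ?_]
    · rw [Real.integral_rpow_mul_exp_neg_mul_Ioi ha hrpos]
    · filter_upwards [MeasureTheory.ae_restrict_mem measurableSet_Ioi] with t ht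
      exact mul_nonneg (Real.rpow_nonneg (le_of_lt ht) _) (Real.exp_pos _).le
  have h5 : (∑' n : ℕ, ENNReal.ofReal (F n)) = ENNReal.ofReal ((1 / r) ^ a * Real.Gamma a) := by
    calc (∑' n : ℕ, ENNReal.ofReal (F n))
        = ∑' n : ℕ, ∫⁻ t in Ioi (0:ℝ),
            ENNReal.ofReal (Real.exp (-t) * t ^ (a + n - 1) * (x ^ n / n.factorial)) :=
          (tsum_congr fun n => (h1 n).symm)
      _ = ∫⁻ t in Ioi (0:ℝ), ∑' n : ℕ,
            ENNReal.ofReal (Real.exp (-t) * t ^ (a + n - 1) * (x ^ n / n.factorial)) := h3.symm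
      _ = ∫⁻ t in Ioi (0:ℝ), ENNReal.ofReal (t ^ (a - 1) * Real.exp (-(r * t))) := by
          apply MeasureTheory.setLIntegral_congr_fun measurableSet_Ioi
          exact h2
      _ = ENNReal.ofReal ((1 / r) ^ a * Real.Gamma a) := h4
  have hne : (∑' n : ℕ, ENNReal.ofReal (F n)) ≠ ⊤ := by
    rw [h5]; exact ENNReal.ofReal_ne_top
  have hsummable : Summable F := by
    have := ENNReal.summable_toReal hne
    refine this.congr fun n => ?_
    exact ENNReal.toReal_ofReal (hterm n)
  refine hsummable.hasSum_iff.mpr ?_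
  have hΓpos : 0 < Real.Gamma a := Real.Gamma_pos_of_pos ha
  calc (∑' n : ℕ, F n) = (∑' n : ℕ, ENNReal.ofReal (F n)).toReal := by
        rw [ENNReal.tsum_toReal_eq (fun _ => ENNReal.ofReal_ne_top)]
        exact tsum_congr fun n => (ENNReal.toReal_ofReal (hterm n)).symm
    _ = (1 / r) ^ a * Real.Gamma a := by
        rw [h5, ENNReal.toReal_ofReal (by positivity)]

/-- The key summation: `∑ₖ f(s;k,α,β) = eˢ·((1+β)/β)^α`. -/
lemma hasSum_f (s : ℝ) (hs : 0 ≤ s) {α β : ℝ} (hα : 0 < α) (hβ : 0 < β) :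
    HasSum (fun k : ℕ => f s k α β) ((1 / (β / (1 + β))) ^ α * Real.exp s) := by
  have hβ1 : (0:ℝ) < 1 + β := by linarith
  have hΓ : 0 < Real.Gamma α := Real.Gamma_pos_of_pos hα
  set x : ℝ := (1 + β)⁻¹ with hxdef
  have hx0 : 0 ≤ x := by positivity
  have hx1 : x < 1 := by
    rw [hxdef, inv_lt_one₀ hβ1]; linarith
  set a : ℕ → ℝ := fun n => Real.Gamma (α + n) * x ^ n / n.factorial / Real.Gamma α with hadef
  set b : ℕ → ℝ := fun m => s ^ m / m.factorial with hbdef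
  have ha : HasSum a ((1 / (1 - x)) ^ α) := by
    have := (hasSum_binomial hα hx0 hx1).div_const (Real.Gamma α)
    rwa [mul_div_assoc, div_self hΓ.ne', mul_one] at this
  have hb : HasSum b (Real.exp s) := by
    rw [Real.exp_eq_exp_ℝ]
    exact NormedSpace.expSeries_div_hasSum_exp s
  have hanonneg : ∀ n, 0 ≤ a n := by
    intro n
    have h1 : 0 < Real.Gamma (α + n) := Real.Gamma_pos_of_pos (by positivity)
    simp only [hadef]
    positivity
  have hbnonneg : ∀ n, 0 ≤ b n := fun n => by simp only [hbdef]; positivity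
  have hna : Summable fun n => ‖a n‖ := by
    refine ha.summable.congr fun n => ?_
    rw [Real.norm_eq_abs, abs_of_nonneg (hanonneg n)]
  have hnb : Summable fun n => ‖b n‖ := by
    refine hb.summable.congr fun n => ?_
    rw [Real.norm_eq_abs, abs_of_nonneg (hbnonneg n)]
  have hfeq : ∀ k : ℕ, f s k α β = ∑ n ∈ Finset.range (k + 1), a n * b (k - n) := by
    intro k
    unfold f
    refine Finset.sum_congr rfl fun n _ => ?_
    have hfac1 : (0:ℝ) < n.factorial := by exact_mod_cast n.factorial_pos
    have hfac2 : (0:ℝ) < (k - n).factorial := by exact_mod_cast (k - n).factorial_pos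
    simp only [hadef, hbdef, hxdef, div_eq_mul_inv, mul_inv, inv_pow, inv_inv]
    ring
  have hsummable : Summable fun k => f s k α β := by
    refine ((summable_norm_sum_mul_range_of_summable_norm hna hnb).of_norm).congr fun k => ?_
    exact (hfeq k).symm
  refine hsummable.hasSum_iff.mpr ?_
  have h1x : 1 - x = β / (1 + β) := by
    rw [hxdef]; field_simp; ring
  calc (∑' k : ℕ, f s k α β) = ∑' k : ℕ, ∑ n ∈ Finset.range (k + 1), a n * b (k - n) :=
        tsum_congr hfeq
    _ = (∑' n, a n) * ∑' n, b n :=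
        (tsum_mul_tsum_eq_tsum_sum_range_of_summable_norm hna hnb).symm
    _ = (1 / (β / (1 + β))) ^ α * Real.exp s := by
        rw [ha.tsum_eq, hb.tsum_eq, h1x]

theorem statement8 (s : ℝ) (hs : 0 ≤ s) (α β : ℝ) (hα : 0 < α) (hβ : 0 < β)
    (hsum : Summable fun n : ℕ => f s n α β ^ 2 / f s (n + 1) α β) :
    ∑' k : ℕ, p s k α β * (-1 + (if k = 0 then 0 else f s (k - 1) α β) / f s k α β) ^ 2 =
      (β / (1 + β)) ^ α * Real.exp (-s) *
        (∑' n : ℕ, f s n α β ^ 2 / f s (n + 1) α β) - 1 := by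
  have hβ1 : (0:ℝ) < 1 + β := by linarith
  have hbb : (0:ℝ) < β / (1 + β) := by positivity
  set c : ℝ := (β / (1 + β)) ^ α * Real.exp (-s) with hcdef
  have hcpos : 0 < c := by positivity
  set g : ℕ → ℝ := fun k => if k = 0 then 0 else f s (k - 1) α β with hgdef
  have hfpos : ∀ k, 0 < f s k α β := f_pos hs hα hβ
  -- key normalization : c * ∑' f = 1
  have hFsum := hasSum_f s hs hα hβ
  have hF : Summable fun k => f s k α β := hFsum.summable
  have hnorm : c * (∑' k, f s k α β) = 1 := by
    rw [hFsum.tsum_eq, hcdef, one_div, Real.inv_rpow hbb.le]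
    have h1 : (β / (1 + β)) ^ α ≠ 0 := (Real.rpow_pos_of_pos hbb α).ne'
    calc (β / (1 + β)) ^ α * Real.exp (-s) * (((β / (1 + β)) ^ α)⁻¹ * Real.exp s)
        = ((β / (1 + β)) ^ α * ((β / (1 + β)) ^ α)⁻¹) * (Real.exp (-s) * Real.exp s) := by ring
      _ = 1 := by
          rw [mul_inv_cancel₀ h1, ← Real.exp_add, neg_add_cancel, Real.exp_zero, mul_one]
  have hG2 : Summable (fun k => g k ^ 2 / f s k α β) := by
    rw [← summable_nat_add_iff 1]
    refine hsum.congr fun n => ?_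
    simp [hgdef]
  have hGs : Summable g := by
    rw [← summable_nat_add_iff 1]
    refine hF.congr fun n => ?_
    simp [hgdef]
  have hGt : (∑' k, g k) = ∑' k, f s k α β := by
    rw [Summable.tsum_eq_zero_add hGs]
    simp [hgdef]
  have hG2t : (∑' k, g k ^ 2 / f s k α β) = ∑' n, f s n α β ^ 2 / f s (n + 1) α β := by
    rw [Summable.tsum_eq_zero_add hG2]
    simp [hgdef]
  have hterm : ∀ k, p s k α β * (-1 + g k / f s k α β) ^ 2
      = (c * (g k ^ 2 / f s k α β) - 2 * c * g k) + c * f s k α β := by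
    intro k
    have hf := (hfpos k).ne'
    unfold p
    rw [← hcdef]
    field_simp
    ring
  calc (∑' k : ℕ, p s k α β * (-1 + g k / f s k α β) ^ 2)
      = ∑' k, ((c * (g k ^ 2 / f s k α β) - 2 * c * g k) + c * f s k α β) :=
        tsum_congr hterm
    _ = (∑' k, (c * (g k ^ 2 / f s k α β) - 2 * c * g k)) + ∑' k, c * f s k α β :=
        Summable.tsum_add ((hG2.mul_left c).sub (hGs.mul_left (2 * c))) (hF.mul_left c)
    _ = ((∑' k, c * (g k ^ 2 / f s k α β)) - ∑' k, 2 * c * g k) + ∑' k, c * f s k α β := by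
        rw [Summable.tsum_sub (hG2.mul_left c) (hGs.mul_left (2 * c))]
    _ = (c * (∑' k, g k ^ 2 / f s k α β) - 2 * c * (∑' k, g k)) + c * ∑' k, f s k α β := by
        rw [tsum_mul_left, tsum_mul_left, tsum_mul_left]
    _ = c * (∑' n : ℕ, f s n α β ^ 2 / f s (n + 1) α β) - 1 := by
        rw [hG2t, hGt]
        linear_combination (-1 : ℝ) * hnorm
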